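/- arXiv:1104.1606 — 3 statements merged into one kernel-verified Lean document; each statement's English description precedes it below -/
import Mathlib

section
/- For all x ≥ y > 0 and λ > 0, the quantity G(x,y) = (e^{-x√(2λ)} cosh(y√(2λ)) / √(2λ³)) · ((x√(2λ)+1)·tanh(y√(2λ)) − y√(2λ)) satisfies 0 ≤ G(x,y) ≤ √(2/λ)·x·y. -/
lemma sinh_le_mul_cosh (b : ℝ) (hb : 0 ≤ b) : Real.sinh b ≤ b * Real.cosh b := by
  have mono : Monotone (fun t : ℝ => t * Real.cosh t - Real.sinh t) := by
    apply monotone_of_deriv_nonneg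
    · exact (differentiable_id.mul Real.differentiable_cosh).sub Real.differentiable_sinh
    · intro t
      have h1 : HasDerivAt (fun t : ℝ => t * Real.cosh t - Real.sinh t)
          (1 * Real.cosh t + t * Real.sinh t - Real.cosh t) t :=
        ((hasDerivAt_id t).mul (Real.hasDerivAt_cosh t)).sub (Real.hasDerivAt_sinh t)
      rw [h1.deriv]
      have h2 : (0:ℝ) ≤ t * Real.sinh t := by
        rcases le_or_gt 0 t with h | h
        · exact mul_nonneg h (Real.sinh_nonneg_iff.2 h)
        · exact le_of_lt (mul_pos_of_neg_of_neg h (Real.sinh_neg_iff.2 h))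
      linarith
  have := mono hb
  simp only [Real.sinh_zero, Real.cosh_zero] at this
  linarith [this]

lemma mul_cosh_le_sinh (b : ℝ) (hb : 0 ≤ b) : b * Real.cosh b ≤ (b + 1) * Real.sinh b := by
  have hexp : 1 + 2 * b ≤ Real.exp (2 * b) := by
    have := Real.add_one_le_exp (2 * b); linarith
  have h2 : Real.exp (2 * b) = Real.exp b * Real.exp b := by
    rw [← Real.exp_add]; ring_nf
  have hpos : 0 < Real.exp b := Real.exp_pos b
  have hneg : Real.exp (-b) = 1 / Real.exp b := by
    rw [Real.exp_neg]; exact inv_eq_one_div _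
  rw [Real.sinh_eq, Real.cosh_eq, hneg]
  rw [h2] at hexp
  rw [← sub_nonneg]
  have heq : (b + 1) * ((Real.exp b - 1 / Real.exp b) / 2)
      - b * ((Real.exp b + 1 / Real.exp b) / 2)
      = (Real.exp b * Real.exp b - (1 + 2 * b)) / (2 * Real.exp b) := by
    field_simp; ring
  rw [heq]
  apply div_nonneg (by linarith) (by positivity)

/-- For `x ≥ y > 0` and `λ > 0`, the quantity
`G(x,y) = (e^{-x√(2λ)} cosh(y√(2λ))/√(2λ³)) ((x√(2λ)+1) tanh(y√(2λ)) - y√(2λ))`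
satisfies `0 ≤ G(x,y) ≤ √(2/λ) x y`. -/
theorem stmt9 (x y lam : ℝ) (hy : 0 < y) (hxy : y ≤ x) (hlam : 0 < lam) :
    0 ≤ (Real.exp (-x * Real.sqrt (2 * lam)) * Real.cosh (y * Real.sqrt (2 * lam))
          / Real.sqrt (2 * lam ^ 3)) *
        ((x * Real.sqrt (2 * lam) + 1) * Real.tanh (y * Real.sqrt (2 * lam))
          - y * Real.sqrt (2 * lam)) ∧
    (Real.exp (-x * Real.sqrt (2 * lam)) * Real.cosh (y * Real.sqrt (2 * lam))
          / Real.sqrt (2 * lam ^ 3)) *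
        ((x * Real.sqrt (2 * lam) + 1) * Real.tanh (y * Real.sqrt (2 * lam))
          - y * Real.sqrt (2 * lam))
      ≤ Real.sqrt (2 / lam) * x * y := by
  set s := Real.sqrt (2 * lam) with hs
  have hs0 : 0 < s := Real.sqrt_pos.2 (by positivity)
  have hs2 : s ^ 2 = 2 * lam := Real.sq_sqrt (by positivity)
  set a := x * s with ha
  set b := y * s with hb
  have hb0 : 0 < b := mul_pos hy hs0
  have hba : b ≤ a := mul_le_mul_of_nonneg_right hxy hs0.le
  have hcosh : 0 < Real.cosh b := Real.cosh_pos b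
  have hC : 0 < Real.sqrt (2 * lam ^ 3) := Real.sqrt_pos.2 (by positivity)
  have htanh : Real.tanh b = Real.sinh b / Real.cosh b := Real.tanh_eq_sinh_div_cosh b
  -- key nonnegativity of the bracket (after multiplying by cosh b)
  have hkey : b * Real.cosh b ≤ (a + 1) * Real.sinh b := by
    have h1 := mul_cosh_le_sinh b hb0.le
    have hsinh : 0 ≤ Real.sinh b := Real.sinh_nonneg_iff.2 hb0.le
    nlinarith
  have hbracket : 0 ≤ (a + 1) * Real.tanh b - b := by
    have heq : (a + 1) * (Real.sinh b / Real.cosh b) = ((a + 1) * Real.sinh b) / Real.cosh b := by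
      ring
    rw [htanh, heq, sub_nonneg, le_div_iff₀ hcosh]
    exact hkey
  have hleft : 0 ≤ (Real.exp (-x * s) * Real.cosh b / Real.sqrt (2 * lam ^ 3)) *
      ((a + 1) * Real.tanh b - b) := by
    apply mul_nonneg _ hbracket
    positivity
  refine ⟨hleft, ?_⟩
  -- upper bound
  have htle : Real.tanh b ≤ b := by
    rw [htanh, div_le_iff₀ hcosh]
    exact sinh_le_mul_cosh b hb0.le
  have htpos : 0 < Real.tanh b := by
    rw [htanh]
    exact div_pos (Real.sinh_pos_iff.2 hb0) hcosh
  have hbr2 : (a + 1) * Real.tanh b - b ≤ a * b := by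
    have ha0 : 0 < a := lt_of_lt_of_le hb0 hba
    nlinarith
  have hec : Real.exp (-x * s) * Real.cosh b ≤ 1 := by
    rw [Real.cosh_eq]
    have h1 : Real.exp (-x * s) * Real.exp b = Real.exp (b - a) := by
      rw [← Real.exp_add, ha]; ring_nf
    have h2 : Real.exp (-x * s) * Real.exp (-b) = Real.exp (-a - b) := by
      rw [← Real.exp_add, ha]; ring_nf
    have h3 : Real.exp (b - a) ≤ 1 := Real.exp_le_one_iff.2 (by linarith)
    have h4 : Real.exp (-a - b) ≤ 1 := Real.exp_le_one_iff.2 (by linarith)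
    calc Real.exp (-x * s) * ((Real.exp b + Real.exp (-b)) / 2)
        = (Real.exp (-x * s) * Real.exp b + Real.exp (-x * s) * Real.exp (-b)) / 2 := by ring
      _ = (Real.exp (b - a) + Real.exp (-a - b)) / 2 := by rw [h1, h2]
      _ ≤ 1 := by linarith
  have hsqrt : Real.sqrt (2 / lam) * Real.sqrt (2 * lam ^ 3) = 2 * lam := by
    rw [← Real.sqrt_mul (by positivity)]
    have : 2 / lam * (2 * lam ^ 3) = (2 * lam) ^ 2 := by
      field_simp
    rw [this, Real.sqrt_sq (by positivity)]
  have hrhs : Real.sqrt (2 / lam) * x * y = a * b / Real.sqrt (2 * lam ^ 3) := by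
    rw [eq_div_iff hC.ne']
    have h5 : a * b = x * y * s ^ 2 := by rw [ha, hb]; ring
    rw [h5, hs2, ← hsqrt]; ring
  rw [hrhs]
  rw [div_mul_eq_mul_div, div_le_div_iff₀ hC hC]
  have step1 : Real.exp (-x * s) * Real.cosh b * ((a + 1) * Real.tanh b - b)
      ≤ 1 * ((a + 1) * Real.tanh b - b) :=
    mul_le_mul_of_nonneg_right hec hbracket
  have step2 : (1:ℝ) * ((a + 1) * Real.tanh b - b) ≤ a * b := by linarith
  nlinarith [hC, step1, step2]
end

section
/- For positive reals r₁, …, r_l, there is a constant C depending only on l such that ∫_ℝ ∏_{i=1}^l (1/r_i)·(1/(1+(x/√r_i)²)) dx ≤ C·√(min(r₁,…,r_l)) / ∏_{i=1}^l r_i. -/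
open MeasureTheory

/-- For positive reals `r₁, …, r_l` there is a constant `C` depending only
on `l` such that `∫_ℝ ∏ (1/rᵢ)(1/(1+(x/√rᵢ)²)) dx ≤ C √(min rᵢ) / ∏ rᵢ`. -/
theorem stmt15 (l : ℕ) (hl : 0 < l) :
    ∃ C : ℝ, 0 < C ∧ ∀ r : Fin l → ℝ, (∀ i, 0 < r i) →
      ∫ x : ℝ, ∏ i, (1 / r i) * (1 / (1 + (x / Real.sqrt (r i)) ^ 2))
        ≤ C * Real.sqrt (sInf (Set.range r)) / ∏ i, r i := by
  refine ⟨Real.pi, Real.pi_pos, fun r hr => ?_⟩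
  haveI : Nonempty (Fin l) := ⟨⟨0, hl⟩⟩
  -- the infimum is attained
  obtain ⟨i₀, hi₀⟩ : sInf (Set.range r) ∈ Set.range r :=
    (Set.range_nonempty r).csInf_mem (Set.finite_range r)
  set m : ℝ := sInf (Set.range r) with hm
  have hm_pos : 0 < m := hi₀ ▸ hr i₀
  have hsm : 0 < Real.sqrt m := Real.sqrt_pos.2 hm_pos
  have hprod_pos : 0 < ∏ i, r i := Finset.prod_pos fun i _ => hr i
  -- the dominating function
  set g : ℝ → ℝ := fun x => (∏ i, (1 / r i)) * (1 + (x / Real.sqrt m) ^ 2)⁻¹ with hg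
  have hg_int : Integrable g := by
    exact ((integrable_inv_one_add_sq.comp_div (ne_of_gt hsm))).const_mul _
  have hfac_nonneg : ∀ (x : ℝ) (i : Fin l), 0 ≤ (1 / r i) * (1 / (1 + (x / Real.sqrt (r i)) ^ 2)) := by
    intro x i
    have h2 := hr i
    have h1 : (0:ℝ) < 1 + (x / Real.sqrt (r i)) ^ 2 := by positivity
    positivity
  have hbound : ∀ x : ℝ, ∏ i, (1 / r i) * (1 / (1 + (x / Real.sqrt (r i)) ^ 2)) ≤ g x := by
    intro x
    rw [Finset.prod_mul_distrib]
    set a : Fin l → ℝ := fun i => 1 / (1 + (x / Real.sqrt (r i)) ^ 2) with ha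
    have ha_nonneg : ∀ i, 0 ≤ a i := by
      intro i
      have h1 : (0:ℝ) < 1 + (x / Real.sqrt (r i)) ^ 2 := by positivity
      positivity
    have ha_le_one : ∀ i, a i ≤ 1 := by
      intro i
      have h1 : (1:ℝ) ≤ 1 + (x / Real.sqrt (r i)) ^ 2 := by nlinarith [sq_nonneg (x / Real.sqrt (r i))]
      simpa [ha] using div_le_one_of_le₀ h1 (by positivity)
    have hprod_a : ∏ i, a i ≤ a i₀ := by
      rw [← Finset.prod_erase_mul Finset.univ a (Finset.mem_univ i₀)]
      calc (∏ i ∈ Finset.univ.erase i₀, a i) * a i₀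
          ≤ 1 * a i₀ := by
            apply mul_le_mul_of_nonneg_right _ (ha_nonneg i₀)
            exact Finset.prod_le_one (fun i _ => ha_nonneg i) (fun i _ => ha_le_one i)
        _ = a i₀ := one_mul _
    have hai₀ : a i₀ = (1 + (x / Real.sqrt m) ^ 2)⁻¹ := by
      simp [ha, hi₀, one_div]
    rw [hg]
    apply mul_le_mul_of_nonneg_left _
      (Finset.prod_nonneg fun i _ => one_div_nonneg.2 (hr i).le)
    rw [← hai₀]; exact hprod_a
  have hnonneg : ∀ x : ℝ, 0 ≤ ∏ i, (1 / r i) * (1 / (1 + (x / Real.sqrt (r i)) ^ 2)) := by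
    intro x; exact Finset.prod_nonneg fun i _ => hfac_nonneg x i
  have hIg : ∫ x : ℝ, g x = (∏ i, (1 / r i)) * (Real.sqrt m * Real.pi) := by
    rw [hg, MeasureTheory.integral_const_mul]
    congr 1
    have := MeasureTheory.Measure.integral_comp_div (fun y : ℝ => (1 + y ^ 2)⁻¹) (Real.sqrt m)
    rw [this, integral_univ_inv_one_add_sq, abs_of_pos hsm, smul_eq_mul]
  calc ∫ x : ℝ, ∏ i, (1 / r i) * (1 / (1 + (x / Real.sqrt (r i)) ^ 2))
      ≤ ∫ x : ℝ, g x := by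
        apply integral_mono_of_nonneg
        · exact Filter.Eventually.of_forall hnonneg
        · exact hg_int
        · exact Filter.Eventually.of_forall hbound
    _ = (∏ i, (1 / r i)) * (Real.sqrt m * Real.pi) := hIg
    _ = Real.pi * Real.sqrt m / ∏ i, r i := by
        rw [Finset.prod_div_distrib, Finset.prod_const_one]
        field_simp
end

section
/- Let x, y > 0 and r > 0. Under the reflection-principle identity P^r_{x→y}(inf X ≥ 0) = 1 − e^{−2xy/r} for the Brownian bridge from x to y of duration r, one has ∫_0^∞ p_r(x,y)·e^{−λr}·(1 − e^{−2xy/r}) dr = (e^{−|x−y|√(2λ)}/√(2λ))·(1 − e^{−2√(2λ)·min(x,y)}), where p_r(x,y) = (2πr)^{−1/2}e^{−(x−y)²/(2r)}. -/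
open MeasureTheory

open Set Real


lemma gDeriv (c b t : ℝ) (ht : 0 < t) :
    HasDerivAt (fun u => c * u - b / u) (c + b / t ^ 2) t := by
  have h1 : HasDerivAt (fun u : ℝ => c * u) c t := by
    simpa using (hasDerivAt_id t).const_mul c
  have h2 : HasDerivAt (fun u : ℝ => b / u) (b * (-(t ^ 2)⁻¹)) t := by
    simpa [div_eq_mul_inv] using (hasDerivAt_inv ht.ne').const_mul b
  rw [show c + b / t ^ 2 = c - b * (-(t ^ 2)⁻¹) by ring]
  exact h1.sub h2

lemma gMono (c b : ℝ) (hc : 0 ≤ c) (hb : 0 < b) :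
    StrictMonoOn (fun t => c * t - b / t) (Set.Ioi 0) := by
  intro s hs t ht hst
  simp only [Set.mem_Ioi] at hs ht
  have h1 : c * s ≤ c * t := mul_le_mul_of_nonneg_left hst.le hc
  have h2 : b / t < b / s := div_lt_div_of_pos_left hb hs hst
  simp only
  linarith

lemma gSurj (c b : ℝ) (hc : 0 < c) (hb : 0 < b) :
    (fun t => c * t - b / t) '' Set.Ioi 0 = Set.univ := by
  apply Set.eq_univ_of_forall
  intro u
  set D := Real.sqrt (u ^ 2 + 4 * c * b) with hD
  have hD2 : D ^ 2 = u ^ 2 + 4 * c * b := Real.sq_sqrt (by positivity)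
  have hDnn : 0 ≤ D := Real.sqrt_nonneg _
  have hDu : -u < D := by nlinarith [mul_pos hc hb]
  have htpos : 0 < (u + D) / (2 * c) := by
    have : 0 < u + D := by linarith
    positivity
  refine ⟨(u + D) / (2 * c), htpos, ?_⟩
  have hud : u + D ≠ 0 := by nlinarith
  field_simp [hud]
  nlinarith [hD2]
lemma glasser {α b : ℝ} (hα : 0 < α) (hb : 0 < b) :
    IntegrableOn (fun t => Real.exp (-(α * t ^ 2 + b ^ 2 / t ^ 2))) (Set.Ioi 0) volume ∧
    ∫ t in Set.Ioi 0, Real.exp (-(α * t ^ 2 + b ^ 2 / t ^ 2))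
      = Real.sqrt Real.pi / (2 * Real.sqrt α) * Real.exp (-(2 * Real.sqrt α * b)) := by
  set c := Real.sqrt α with hc
  have hc0 : 0 < c := Real.sqrt_pos.2 hα
  have hc2 : c ^ 2 = α := Real.sq_sqrt hα.le
  set g : ℝ → ℝ := fun t => c * t - b / t with hg
  have hderiv : ∀ t ∈ Set.Ioi (0:ℝ), HasDerivWithinAt g (c + b / t ^ 2) (Set.Ioi 0) t :=
    fun t ht => (gDeriv c b t ht).hasDerivWithinAt
  have hinj : Set.InjOn g (Set.Ioi 0) := (gMono c b hc0.le hb).injOn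
  have himg : g '' Set.Ioi 0 = Set.univ := gSurj c b hc0 hb
  have hcv : ∫ u, Real.exp (-u ^ 2)
      = ∫ t in Set.Ioi 0, |c + b / t ^ 2| • Real.exp (-(g t) ^ 2) := by
    rw [← setIntegral_univ, ← himg]
    exact integral_image_eq_integral_abs_deriv_smul measurableSet_Ioi hderiv hinj _
  have hgauss : ∫ u : ℝ, Real.exp (-u ^ 2) = Real.sqrt Real.pi := by
    simpa using integral_gaussian 1
  have hIt : IntegrableOn (fun t => |c + b / t ^ 2| • Real.exp (-(g t) ^ 2)) (Set.Ioi 0) volume := by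
    apply (integrableOn_image_iff_integrableOn_abs_deriv_smul measurableSet_Ioi hderiv hinj
      (fun u => Real.exp (-u ^ 2))).1
    rw [himg]
    have : Integrable (fun u : ℝ => Real.exp (-u ^ 2)) volume := by
      simpa using integrable_exp_neg_mul_sq (one_pos (α := ℝ))
    exact this.integrableOn
  have habs : ∀ t ∈ Set.Ioi (0:ℝ), |c + b / t ^ 2| = c + b / t ^ 2 := by
    intro t ht
    have ht' : (0:ℝ) < t := ht
    exact abs_of_pos (by positivity)
  have hA : IntegrableOn (fun t => c * Real.exp (-(g t) ^ 2)) (Set.Ioi 0) volume := by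
    apply hIt.mono'
    · exact (measurable_const.mul ((((measurable_const.mul measurable_id').sub
        (measurable_const.div measurable_id')).pow_const 2).neg.exp)).aestronglyMeasurable
    · refine (ae_restrict_iff' measurableSet_Ioi).2 (Filter.Eventually.of_forall fun t ht => ?_)
      have ht' : (0:ℝ) < t := ht
      rw [habs t ht, smul_eq_mul, Real.norm_eq_abs, abs_mul, abs_of_pos hc0,
        abs_of_pos (Real.exp_pos _)]
      have hle : c ≤ c + b / t ^ 2 := le_add_of_nonneg_right (by positivity)
      exact mul_le_mul_of_nonneg_right hle (Real.exp_pos _).le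
  have hB : IntegrableOn (fun t => (b / t ^ 2) * Real.exp (-(g t) ^ 2)) (Set.Ioi 0) volume := by
    apply hIt.mono'
    · exact ((measurable_const.div (measurable_id'.pow_const 2)).mul
        ((((measurable_const.mul measurable_id').sub
        (measurable_const.div measurable_id')).pow_const 2).neg.exp)).aestronglyMeasurable
    · refine (ae_restrict_iff' measurableSet_Ioi).2 (Filter.Eventually.of_forall fun t ht => ?_)
      have ht' : (0:ℝ) < t := ht
      rw [habs t ht, smul_eq_mul, Real.norm_eq_abs, abs_mul,
        abs_of_pos (show (0:ℝ) < b / t ^ 2 by positivity), abs_of_pos (Real.exp_pos _)]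
      have hle : b / t ^ 2 ≤ c + b / t ^ 2 := le_add_of_nonneg_left hc0.le
      exact mul_le_mul_of_nonneg_right hle (Real.exp_pos _).le
  have hsum : (∫ t in Set.Ioi 0, c * Real.exp (-(g t) ^ 2))
      + (∫ t in Set.Ioi 0, (b / t ^ 2) * Real.exp (-(g t) ^ 2)) = Real.sqrt Real.pi := by
    rw [← integral_add hA hB, ← hgauss, hcv]
    apply setIntegral_congr_fun measurableSet_Ioi
    intro t ht
    simp only [smul_eq_mul]
    rw [habs t ht]
    ring
  have hABinv : ∀ t ∈ Set.Ioi (0:ℝ), g (b / (c * t)) = -(g t) := by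
    intro t ht
    have ht' : (0:ℝ) < t := ht
    simp only [hg]
    field_simp
    ring
  have hAB : (∫ t in Set.Ioi 0, c * Real.exp (-(g t) ^ 2))
      = ∫ t in Set.Ioi 0, (b / t ^ 2) * Real.exp (-(g t) ^ 2) := by
    set f : ℝ → ℝ := fun t => b / c * t⁻¹ with hf
    have hfderiv : ∀ t ∈ Set.Ioi (0:ℝ),
        HasDerivWithinAt f (b / c * (-(t ^ 2)⁻¹)) (Set.Ioi 0) t :=
      fun t ht => (((hasDerivAt_inv (ne_of_gt ht)).const_mul (b / c))).hasDerivWithinAt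
    have hfval : ∀ t : ℝ, 0 < t → f t = b / (c * t) := by
      intro t ht; simp only [hf]; field_simp
    have hfinv : ∀ t : ℝ, 0 < t → f (f t) = t := by
      intro t ht
      simp only [hf]
      field_simp
    have hfpos : ∀ t : ℝ, 0 < t → 0 < f t := by
      intro t ht; rw [hfval t ht]; positivity
    have hfimg : f '' Set.Ioi 0 = Set.Ioi 0 := by
      apply Set.Subset.antisymm
      · rintro _ ⟨t, ht, rfl⟩; exact hfpos t ht
      · intro u hu
        exact ⟨f u, hfpos u hu, hfinv u hu⟩
    have hfinj : Set.InjOn f (Set.Ioi 0) := by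
      intro s hs t ht hst
      have := congrArg f hst
      rwa [hfinv s hs, hfinv t ht] at this
    calc (∫ t in Set.Ioi 0, c * Real.exp (-(g t) ^ 2))
        = ∫ t in f '' Set.Ioi 0, c * Real.exp (-(g t) ^ 2) := by rw [hfimg]
      _ = ∫ t in Set.Ioi 0, |b / c * (-(t ^ 2)⁻¹)| • (c * Real.exp (-(g (f t)) ^ 2)) :=
          integral_image_eq_integral_abs_deriv_smul measurableSet_Ioi hfderiv hfinj _
      _ = ∫ t in Set.Ioi 0, (b / t ^ 2) * Real.exp (-(g t) ^ 2) := by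
          apply setIntegral_congr_fun measurableSet_Ioi
          intro t ht
          have ht' : (0:ℝ) < t := ht
          show |b / c * (-(t ^ 2)⁻¹)| • (c * Real.exp (-(g (f t)) ^ 2))
            = (b / t ^ 2) * Real.exp (-(g t) ^ 2)
          rw [hfval t ht', hABinv t ht, smul_eq_mul]
          rw [abs_mul, abs_of_pos (show (0:ℝ) < b / c by positivity),
            abs_neg, abs_of_pos (show (0:ℝ) < ((t:ℝ) ^ 2)⁻¹ by positivity)]
          rw [neg_sq]
          field_simp
  have hAval : (∫ t in Set.Ioi 0, c * Real.exp (-(g t) ^ 2)) = Real.sqrt Real.pi / 2 := by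
    rw [hAB] at hsum
    rw [hAB]
    linarith
  have hEval : (∫ t in Set.Ioi 0, Real.exp (-(g t) ^ 2))
      = Real.sqrt Real.pi / (2 * c) := by
    rw [integral_const_mul] at hAval
    rw [eq_div_iff (by positivity)]
    rw [eq_div_iff (by norm_num : (2:ℝ) ≠ 0)] at hAval
    linarith [hAval]
  have hE : IntegrableOn (fun t => Real.exp (-(g t) ^ 2)) (Set.Ioi 0) volume := by
    have h := hA.const_mul (1 / c)
    have : (fun t => (1 / c) * (c * Real.exp (-(g t) ^ 2)))
        = fun t => Real.exp (-(g t) ^ 2) := by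
      funext t
      field_simp
    rwa [this] at h
  have hpt : Set.EqOn (fun t => Real.exp (-(α * t ^ 2 + b ^ 2 / t ^ 2)))
      (fun t => Real.exp (-(2 * c * b)) * Real.exp (-(g t) ^ 2)) (Set.Ioi 0) := by
    intro t ht
    have ht' : (0:ℝ) < t := ht
    show Real.exp (-(α * t ^ 2 + b ^ 2 / t ^ 2))
      = Real.exp (-(2 * c * b)) * Real.exp (-(g t) ^ 2)
    rw [← Real.exp_add]
    congr 1
    have hgt : (g t) ^ 2 = α * t ^ 2 + b ^ 2 / t ^ 2 - 2 * c * b := by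
      have h1 : (c * t - b / t) ^ 2 = c ^ 2 * t ^ 2 + b ^ 2 / t ^ 2 - 2 * c * b := by
        field_simp
        ring
      simp only [hg]
      rw [h1, hc2]
    rw [hgt]; ring
  constructor
  · exact MeasureTheory.IntegrableOn.congr_fun (hE.const_mul _) hpt.symm measurableSet_Ioi
  · rw [setIntegral_congr_fun measurableSet_Ioi hpt, integral_const_mul, hEval]
    ring

lemma kernel {a lam : ℝ} (ha : 0 ≤ a) (hlam : 0 < lam) :
    IntegrableOn (fun r => 1 / Real.sqrt (2 * Real.pi * r) * Real.exp (-a ^ 2 / (2 * r))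
        * Real.exp (-lam * r)) (Set.Ioi 0) volume ∧
    (∫ r in Set.Ioi 0, 1 / Real.sqrt (2 * Real.pi * r) * Real.exp (-a ^ 2 / (2 * r))
        * Real.exp (-lam * r))
      = Real.exp (-a * Real.sqrt (2 * lam)) / Real.sqrt (2 * lam) := by
  have hpi := Real.pi_pos
  set K : ℝ → ℝ := fun r => 1 / Real.sqrt (2 * Real.pi * r) * Real.exp (-a ^ 2 / (2 * r))
    * Real.exp (-lam * r) with hKdef
  have hderiv : ∀ t ∈ Set.Ioi (0:ℝ),
      HasDerivWithinAt (fun t : ℝ => t ^ 2) (2 * t) (Set.Ioi 0) t := by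
    intro t ht
    simpa [mul_comm] using (hasDerivAt_pow 2 t).hasDerivWithinAt
  have hinj : Set.InjOn (fun t : ℝ => t ^ 2) (Set.Ioi 0) := by
    have h : StrictMonoOn (fun t : ℝ => t ^ 2) (Set.Ioi 0) := by
      intro s hs t ht hst
      have hs' : (0:ℝ) < s := hs
      have ht' : (0:ℝ) < t := ht
      simp only
      nlinarith
    exact h.injOn
  have himg : (fun t : ℝ => t ^ 2) '' Set.Ioi 0 = Set.Ioi 0 := by
    apply Set.Subset.antisymm
    · rintro _ ⟨t, ht, rfl⟩
      have : (0:ℝ) < t := ht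
      exact pow_pos this 2
    · intro u hu
      have hu' : (0:ℝ) < u := hu
      exact ⟨Real.sqrt u, Real.sqrt_pos.2 hu', Real.sq_sqrt hu'.le⟩
  have hsub_int : IntegrableOn K (Set.Ioi 0) volume ↔
      IntegrableOn (fun t => |2 * t| • K (t ^ 2)) (Set.Ioi 0) volume := by
    have h := integrableOn_image_iff_integrableOn_abs_deriv_smul measurableSet_Ioi hderiv hinj K
    rwa [himg] at h
  have hsub_val : (∫ r in Set.Ioi 0, K r) = ∫ t in Set.Ioi 0, |2 * t| • K (t ^ 2) := by
    have h := integral_image_eq_integral_abs_deriv_smul measurableSet_Ioi hderiv hinj K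
    rwa [himg] at h
  have hK : Set.EqOn (fun t => |2 * t| • K (t ^ 2))
      (fun t => 2 / Real.sqrt (2 * Real.pi)
        * Real.exp (-(lam * t ^ 2 + (a ^ 2 / 2) / t ^ 2))) (Set.Ioi 0) := by
    intro t ht
    have ht' : (0:ℝ) < t := ht
    have hs : Real.sqrt (2 * Real.pi * t ^ 2) = Real.sqrt (2 * Real.pi) * t := by
      rw [Real.sqrt_mul (by positivity), Real.sqrt_sq ht'.le]
    have hsq : (0:ℝ) < Real.sqrt (2 * Real.pi) := Real.sqrt_pos.2 (by positivity)
    show |2 * t| • K (t ^ 2) = _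
    simp only [hKdef]
    rw [hs, abs_of_pos (by positivity : (0:ℝ) < 2 * t), smul_eq_mul]
    rw [mul_assoc, mul_assoc, ← Real.exp_add]
    rw [show -a ^ 2 / (2 * t ^ 2) + -lam * t ^ 2
        = -(lam * t ^ 2 + (a ^ 2 / 2) / t ^ 2) by field_simp; ring]
    field_simp
  have key : IntegrableOn (fun t => Real.exp (-(lam * t ^ 2 + (a ^ 2 / 2) / t ^ 2)))
        (Set.Ioi 0) volume ∧
      (∫ t in Set.Ioi 0, Real.exp (-(lam * t ^ 2 + (a ^ 2 / 2) / t ^ 2)))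
        = Real.sqrt Real.pi / (2 * Real.sqrt lam)
          * Real.exp (-(2 * Real.sqrt lam * (a / Real.sqrt 2))) := by
    rcases eq_or_lt_of_le ha with rfl | ha'
    · simp only [ne_eq, OfNat.ofNat_ne_zero, not_false_eq_true, zero_pow, zero_div, add_zero,
        div_zero, mul_zero, neg_zero, Real.exp_zero, mul_one]
      constructor
      · have h : Integrable (fun t : ℝ => Real.exp (-lam * t ^ 2)) volume :=
          integrable_exp_neg_mul_sq hlam
        apply h.integrableOn.congr_fun _ measurableSet_Ioi
        intro t ht
        simp only [neg_mul]
      · have h1 : (∫ t in Set.Ioi 0, Real.exp (-(lam * t ^ 2)))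
            = ∫ t in Set.Ioi 0, Real.exp (-lam * t ^ 2) := by
          apply setIntegral_congr_fun measurableSet_Ioi
          intro t ht
          simp only [neg_mul]
        rw [h1, integral_gaussian_Ioi]
        rw [show Real.pi / lam = Real.pi * lam⁻¹ by ring,
          Real.sqrt_mul hpi.le, Real.sqrt_inv]
        field_simp
    · have hb : 0 < a / Real.sqrt 2 := by positivity
      have hb2 : (a / Real.sqrt 2) ^ 2 = a ^ 2 / 2 := by
        rw [div_pow, Real.sq_sqrt (by norm_num : (0:ℝ) ≤ 2)]
      obtain ⟨hint, hval⟩ := glasser hlam hb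
      rw [hb2] at hint hval
      exact ⟨hint, hval⟩
  obtain ⟨hint, hval⟩ := key
  have hint2 : IntegrableOn K (Set.Ioi 0) volume := by
    rw [hsub_int]
    exact MeasureTheory.IntegrableOn.congr_fun
      (hint.const_mul (2 / Real.sqrt (2 * Real.pi))) hK.symm measurableSet_Ioi
  refine ⟨hint2, ?_⟩
  rw [show (∫ r in Set.Ioi 0, 1 / Real.sqrt (2 * Real.pi * r) * Real.exp (-a ^ 2 / (2 * r))
        * Real.exp (-lam * r)) = ∫ r in Set.Ioi 0, K r from rfl,
    hsub_val, setIntegral_congr_fun measurableSet_Ioi hK, integral_const_mul, hval]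
  have h2 : (Real.sqrt 2) ^ 2 = 2 := Real.sq_sqrt (by norm_num)
  have h2' : (0:ℝ) < Real.sqrt 2 := Real.sqrt_pos.2 (by norm_num)
  have hsp : (0:ℝ) < Real.sqrt Real.pi := Real.sqrt_pos.2 hpi
  have hsl : (0:ℝ) < Real.sqrt lam := Real.sqrt_pos.2 hlam
  have hs2pi : Real.sqrt (2 * Real.pi) = Real.sqrt 2 * Real.sqrt Real.pi :=
    Real.sqrt_mul (by norm_num) _
  have hs2l : Real.sqrt (2 * lam) = Real.sqrt 2 * Real.sqrt lam :=
    Real.sqrt_mul (by norm_num) _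
  have hexp : -(2 * Real.sqrt lam * (a / Real.sqrt 2)) = -a * Real.sqrt (2 * lam) := by
    rw [hs2l]
    rw [show 2 * Real.sqrt lam * (a / Real.sqrt 2)
        = 2 / Real.sqrt 2 * Real.sqrt lam * a by ring, Real.div_sqrt]
    ring
  rw [hexp, hs2pi, hs2l]
  have hcoef : 2 / (Real.sqrt 2 * Real.sqrt Real.pi) * (Real.sqrt Real.pi / (2 * Real.sqrt lam))
      = 1 / (Real.sqrt 2 * Real.sqrt lam) := by
    rw [div_mul_div_comm, div_eq_div_iff (by positivity) (by positivity)]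
    ring
  calc 2 / (Real.sqrt 2 * Real.sqrt Real.pi)
        * (Real.sqrt Real.pi / (2 * Real.sqrt lam)
          * Real.exp (-a * (Real.sqrt 2 * Real.sqrt lam)))
      = 2 / (Real.sqrt 2 * Real.sqrt Real.pi) * (Real.sqrt Real.pi / (2 * Real.sqrt lam))
        * Real.exp (-a * (Real.sqrt 2 * Real.sqrt lam)) := by ring
    _ = Real.exp (-a * (Real.sqrt 2 * Real.sqrt lam)) / (Real.sqrt 2 * Real.sqrt lam) := by
        rw [hcoef]; ring

/-- For `x, y > 0` and `λ > 0`,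
`∫_0^∞ p_r(x,y) e^{-λr} (1 - e^{-2xy/r}) dr
  = (e^{-|x-y|√(2λ)}/√(2λ)) (1 - e^{-2√(2λ) min(x,y)})`. -/
theorem stmt19 (x y lam : ℝ) (hx : 0 < x) (hy : 0 < y) (hlam : 0 < lam) :
    ∫ r in Set.Ioi (0 : ℝ),
        (1 / Real.sqrt (2 * Real.pi * r)) * Real.exp (-(x - y) ^ 2 / (2 * r))
          * Real.exp (-lam * r) * (1 - Real.exp (-2 * x * y / r))
      = (Real.exp (-|x - y| * Real.sqrt (2 * lam)) / Real.sqrt (2 * lam)) *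
          (1 - Real.exp (-2 * Real.sqrt (2 * lam) * min x y)) := by
  obtain ⟨hint1, hval1⟩ := kernel (a := |x - y|) (abs_nonneg _) hlam
  obtain ⟨hint2, hval2⟩ := kernel (a := x + y) (by positivity) hlam
  have hpt : Set.EqOn
      (fun r => (1 / Real.sqrt (2 * Real.pi * r)) * Real.exp (-(x - y) ^ 2 / (2 * r))
          * Real.exp (-lam * r) * (1 - Real.exp (-2 * x * y / r)))
      (fun r => (1 / Real.sqrt (2 * Real.pi * r) * Real.exp (-|x - y| ^ 2 / (2 * r))
            * Real.exp (-lam * r))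
          - (1 / Real.sqrt (2 * Real.pi * r) * Real.exp (-(x + y) ^ 2 / (2 * r))
            * Real.exp (-lam * r))) (Set.Ioi 0) := by
    intro r hr
    have hr' : (0:ℝ) < r := hr
    have he : Real.exp (-(x - y) ^ 2 / (2 * r)) * Real.exp (-2 * x * y / r)
        = Real.exp (-(x + y) ^ 2 / (2 * r)) := by
      rw [← Real.exp_add]
      congr 1
      field_simp
      ring
    show (1 / Real.sqrt (2 * Real.pi * r)) * Real.exp (-(x - y) ^ 2 / (2 * r))
          * Real.exp (-lam * r) * (1 - Real.exp (-2 * x * y / r))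
        = (1 / Real.sqrt (2 * Real.pi * r) * Real.exp (-|x - y| ^ 2 / (2 * r))
            * Real.exp (-lam * r))
          - (1 / Real.sqrt (2 * Real.pi * r) * Real.exp (-(x + y) ^ 2 / (2 * r))
            * Real.exp (-lam * r))
    rw [sq_abs]
    calc (1 / Real.sqrt (2 * Real.pi * r)) * Real.exp (-(x - y) ^ 2 / (2 * r))
          * Real.exp (-lam * r) * (1 - Real.exp (-2 * x * y / r))
        = (1 / Real.sqrt (2 * Real.pi * r) * Real.exp (-(x - y) ^ 2 / (2 * r))
            * Real.exp (-lam * r))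
          - (1 / Real.sqrt (2 * Real.pi * r)
            * (Real.exp (-(x - y) ^ 2 / (2 * r)) * Real.exp (-2 * x * y / r))
            * Real.exp (-lam * r)) := by ring
      _ = _ := by rw [he]
  rw [setIntegral_congr_fun measurableSet_Ioi hpt, integral_sub hint1 hint2, hval1, hval2]
  have hmin : x + y = |x - y| + 2 * min x y := by
    rcases le_total x y with h | h
    · rw [abs_of_nonpos (by linarith), min_eq_left h]; ring
    · rw [abs_of_nonneg (by linarith), min_eq_right h]; ring
  rw [show Real.exp (-(x + y) * Real.sqrt (2 * lam))
      = Real.exp (-|x - y| * Real.sqrt (2 * lam))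
        * Real.exp (-2 * Real.sqrt (2 * lam) * min x y) by
    rw [← Real.exp_add]
    congr 1
    rw [hmin]
    ring]
  ring
end
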